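/- arXiv:1210.4440 — 2 statements merged into one kernel-verified Lean document; each statement's English description precedes it below -/
import Mathlib

section
/- Let d ≥ 2 and let (λ_n) be a nondecreasing sequence of reals with λ_1 > 1, λ_n → ∞, λ_n/n decreasing to 0, and ∑ λ_n (log n)^{d-2} / n² < ∞. Then there exists a sequence (A_n) of positive reals with A_n increasing to ∞, λ_n A_n / n decreasing, and ∑ λ_n (log n)^{d-2} A_n^d / n² < ∞. -/
open Real Filter

namespace Stmt0Aux

noncomputable def aa (d : ℕ) (l : ℕ → ℝ) (n : ℕ) : ℝ :=
  l (n + 1) * (Real.log (n + 1)) ^ (d - 2) / ((n : ℝ) + 1) ^ 2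

noncomputable def rr (d : ℕ) (l : ℕ → ℝ) (n : ℕ) : ℝ := ∑' k, aa d l (k + n)

noncomputable def BB (d : ℕ) (l : ℕ → ℝ) (n : ℕ) : ℝ :=
  rr d l (n - 1) ^ (-(1 / (2 * (d : ℝ))))

noncomputable def cc (d : ℕ) (l : ℕ → ℝ) (k : ℕ) : ℝ := BB d l k * l k / k

noncomputable def mm (d : ℕ) (l : ℕ → ℝ) (j : ℕ) : ℝ :=
  (Finset.Icc 1 (j + 1)).inf' ⟨1, by simp⟩ (cc d l)

noncomputable def AA (d : ℕ) (l : ℕ → ℝ) (n : ℕ) : ℝ :=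
  ((max n 1 : ℕ) : ℝ) / l (max n 1) * mm d l (max n 1 - 1)

section

variable {d : ℕ} {l : ℕ → ℝ} (hd : 2 ≤ d) (hl1 : 1 < l 1) (hmono : Monotone l)
  (hdec : ∀ n : ℕ, 1 ≤ n → l (n + 1) / (n + 1) ≤ l n / n)

include hl1 hmono in
lemma lpos : ∀ n, 1 ≤ n → 0 < l n := fun n hn =>
  lt_of_lt_of_le (lt_trans one_pos hl1) (hmono hn)

include hl1 hmono in
lemma aa_nonneg : ∀ n, 0 ≤ aa d l n := by
  intro n
  have h1 : 0 < l (n + 1) := lpos hl1 hmono (n + 1) (Nat.le_add_left 1 n)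
  have h2 : (0:ℝ) ≤ Real.log (n + 1) := Real.log_nonneg (by push_cast; linarith [Nat.cast_nonneg (α := ℝ) n])
  have h3 : (0:ℝ) < ((n : ℝ) + 1) ^ 2 := by positivity
  exact div_nonneg (mul_nonneg h1.le (pow_nonneg h2 _)) h3.le

include hl1 hmono in
lemma aa_pos : ∀ n, 1 ≤ n → 0 < aa d l n := by
  intro n hn
  have h1 : 0 < l (n + 1) := lpos hl1 hmono (n + 1) (Nat.le_add_left 1 n)
  have h2 : (0:ℝ) < Real.log (n + 1) := by
    apply Real.log_pos
    have : (1:ℝ) ≤ (n : ℝ) := by exact_mod_cast hn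
    linarith
  have h3 : (0:ℝ) < ((n : ℝ) + 1) ^ 2 := by positivity
  exact div_pos (mul_pos h1 (pow_pos h2 _)) h3

include hdec in
lemma ldiv_anti : ∀ k n : ℕ, 1 ≤ k → k ≤ n → l n / n ≤ l k / k := by
  intro k n hk hkn
  induction n, hkn using Nat.le_induction with
  | base => exact le_refl _
  | succ n hn ih => exact le_trans (by exact_mod_cast hdec n (le_trans hk hn)) ih

end

section
variable {d : ℕ} {l : ℕ → ℝ} (hd : 2 ≤ d) (hl1 : 1 < l 1) (hmono : Monotone l)
  (hdec : ∀ n : ℕ, 1 ≤ n → l (n + 1) / (n + 1) ≤ l n / n)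
  (hsum : Summable (aa d l))

include hsum in
lemma rr_summable_tail (n : ℕ) : Summable (fun k => aa d l (k + n)) :=
  (summable_nat_add_iff n).2 hsum

include hsum in
lemma rr_rec (n : ℕ) : rr d l n = aa d l n + rr d l (n + 1) := by
  have := Summable.tsum_eq_zero_add (rr_summable_tail hsum n)
  simp only [zero_add] at this
  rw [rr, this, rr]
  congr 1
  · exact congrArg (tsum) (funext fun k => by ring_nf)

include hl1 hmono hsum in
lemma rr_pos (n : ℕ) : 0 < rr d l n := by
  have h := Summable.le_tsum (rr_summable_tail hsum n) 1
    (fun j _ => aa_nonneg hl1 hmono _)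
  exact lt_of_lt_of_le (aa_pos hl1 hmono (1 + n) (Nat.le_add_right 1 n)) h

include hl1 hmono hsum in
lemma rr_anti : Antitone (rr d l) := by
  apply antitone_nat_of_succ_le
  intro n
  rw [rr_rec hsum n]
  linarith [aa_nonneg hl1 hmono (d := d) n]

include hsum in
lemma rr_to_zero : Tendsto (rr d l) atTop (nhds 0) := tendsto_sum_nat_add (aa d l)

include hd hl1 hmono hsum in
lemma BB_pos (n : ℕ) : 0 < BB d l n := Real.rpow_pos_of_pos (rr_pos hl1 hmono hsum _) _

include hd hl1 hmono hsum in
lemma BB_mono : Monotone (BB d l) := by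
  intro m n hmn
  have h1 : rr d l (n - 1) ≤ rr d l (m - 1) := rr_anti hl1 hmono hsum (Nat.sub_le_sub_right hmn 1)
  exact Real.rpow_le_rpow_of_nonpos (rr_pos hl1 hmono hsum _) h1
    (neg_nonpos.2 (by positivity))

include hd hl1 hmono hsum in
lemma BB_tendsto : Tendsto (BB d l) atTop atTop := by
  have hd0 : (0:ℝ) < 1 / (2 * (d:ℝ)) := by
    have : (0:ℝ) < (d:ℝ) := by exact_mod_cast lt_of_lt_of_le two_pos hd
    positivity
  have h1 : Tendsto (fun n : ℕ => rr d l (n - 1)) atTop (nhdsWithin 0 (Set.Ioi 0)) := by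
    apply tendsto_nhdsWithin_of_tendsto_nhds_of_eventually_within
    · exact (rr_to_zero hsum).comp (tendsto_sub_atTop_nat 1)
    · exact Eventually.of_forall fun n => rr_pos hl1 hmono hsum _
  have h2 : Tendsto (fun n : ℕ => (rr d l (n - 1))⁻¹) atTop atTop :=
    tendsto_inv_nhdsGT_zero.comp h1
  have h3 := (tendsto_rpow_atTop hd0).comp h2
  apply h3.congr
  intro n
  simp only [Function.comp_apply, BB]
  rw [← Real.rpow_neg_one (rr d l (n-1)), ← Real.rpow_mul (rr_pos hl1 hmono hsum _).le,
    neg_one_mul]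

include hd hl1 hmono hsum in
lemma BB_pow (n : ℕ) : BB d l (n + 1) ^ d = (Real.sqrt (rr d l n))⁻¹ := by
  have hr := rr_pos hl1 hmono hsum n
  have hdR : (0:ℝ) < (d:ℝ) := by exact_mod_cast lt_of_lt_of_le two_pos hd
  rw [BB]
  simp only [Nat.add_sub_cancel]
  rw [← Real.rpow_natCast (rr d l n ^ (-(1 / (2 * (d:ℝ))))) d, ← Real.rpow_mul hr.le]
  have he : (-(1 / (2 * (d:ℝ)))) * d = -(1/2) := by
    field_simp
  rw [he, Real.rpow_neg hr.le, ← Real.sqrt_eq_rpow]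

include hd hl1 hmono hsum in
lemma telescope (n : ℕ) :
    aa d l n * (Real.sqrt (rr d l n))⁻¹ ≤
      2 * (Real.sqrt (rr d l n) - Real.sqrt (rr d l (n + 1))) := by
  set u := Real.sqrt (rr d l n) with hu
  set v := Real.sqrt (rr d l (n + 1)) with hv
  have hupos : 0 < u := Real.sqrt_pos.2 (rr_pos hl1 hmono hsum n)
  have hvnn : 0 ≤ v := Real.sqrt_nonneg _
  have hvu : v ≤ u := Real.sqrt_le_sqrt (rr_anti hl1 hmono hsum (Nat.le_succ n))
  have hu2 : u ^ 2 = rr d l n := Real.sq_sqrt (rr_pos hl1 hmono hsum n).le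
  have hv2 : v ^ 2 = rr d l (n + 1) := Real.sq_sqrt (rr_pos hl1 hmono hsum (n+1)).le
  have ha : aa d l n = u ^ 2 - v ^ 2 := by
    rw [hu2, hv2]
    have := rr_rec hsum n
    linarith
  rw [ha, inv_eq_one_div, mul_one_div, div_le_iff₀ hupos]
  nlinarith [sq_nonneg (u - v)]

include hd hl1 hmono hsum in
lemma summable_tel :
    Summable (fun n => 2 * (Real.sqrt (rr d l n) - Real.sqrt (rr d l (n + 1)))) := by
  apply summable_of_sum_range_le (c := 2 * Real.sqrt (rr d l 0))
  · intro n
    have : Real.sqrt (rr d l (n+1)) ≤ Real.sqrt (rr d l n) :=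
      Real.sqrt_le_sqrt (rr_anti hl1 hmono hsum (Nat.le_succ n))
    linarith
  · intro n
    rw [← Finset.mul_sum, Finset.sum_range_sub' (fun i => Real.sqrt (rr d l i))]
    have : 0 ≤ Real.sqrt (rr d l n) := Real.sqrt_nonneg _
    linarith

include hd hl1 hmono hsum in
lemma cc_pos (k : ℕ) (hk : 1 ≤ k) : 0 < cc d l k := by
  have h1 : (0:ℝ) < k := by exact_mod_cast hk
  exact div_pos (mul_pos (BB_pos hd hl1 hmono hsum k) (lpos hl1 hmono k hk)) h1

lemma mm_le_cc (j k : ℕ) (h1 : 1 ≤ k) (h2 : k ≤ j + 1) : mm d l j ≤ cc d l k :=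
  Finset.inf'_le _ (Finset.mem_Icc.2 ⟨h1, h2⟩)

include hd hl1 hmono hsum in
lemma mm_pos (j : ℕ) : 0 < mm d l j := by
  rw [mm]
  apply (Finset.lt_inf'_iff _).2
  intro k hk
  exact cc_pos hd hl1 hmono hsum k (Finset.mem_Icc.1 hk).1

lemma mm_succ (j : ℕ) : mm d l (j + 1) = min (cc d l (j + 2)) (mm d l j) := by
  have hicc : Finset.Icc 1 (j + 2) = insert (j + 2) (Finset.Icc 1 (j + 1)) := by
    ext x; simp only [Finset.mem_Icc, Finset.mem_insert]; omega
  rw [mm, mm]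
  simp_rw [hicc]
  rw [Finset.inf'_insert]
  exact ⟨1, by simp⟩

lemma AA_eq (n : ℕ) (hn : 1 ≤ n) : AA d l n = (n : ℝ) / l n * mm d l (n - 1) := by
  rw [AA, max_eq_left hn]

include hd hl1 hmono hsum in
lemma AA_pos (n : ℕ) : 0 < AA d l n := by
  rw [AA]
  have h1 : 1 ≤ max n 1 := le_max_right n 1
  have h2 : (0:ℝ) < (max n 1 : ℕ) := by exact_mod_cast h1
  exact mul_pos (div_pos h2 (lpos hl1 hmono _ h1)) (mm_pos hd hl1 hmono hsum _)

include hl1 hmono in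
lemma l_mul_AA (n : ℕ) (hn : 1 ≤ n) : l n * AA d l n / n = mm d l (n - 1) := by
  rw [AA_eq n hn]
  have h1 : l n ≠ 0 := (lpos hl1 hmono n hn).ne'
  have h2 : (n:ℝ) ≠ 0 := by
    have : (0:ℝ) < n := by exact_mod_cast hn
    exact this.ne'
  field_simp

include hd hl1 hmono hsum in
lemma div_mul_cc (k : ℕ) (hk : 1 ≤ k) : (k : ℝ) / l k * cc d l k = BB d l k := by
  have h1 : l k ≠ 0 := (lpos hl1 hmono k hk).ne'
  have h2 : (k:ℝ) ≠ 0 := by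
    have : (0:ℝ) < k := by exact_mod_cast hk
    exact this.ne'
  rw [cc]
  field_simp

include hd hl1 hmono hsum in
lemma AA_le_BB (n : ℕ) (hn : 1 ≤ n) : AA d l n ≤ BB d l n := by
  rw [AA_eq n hn]
  have h1 : mm d l (n - 1) ≤ cc d l n := mm_le_cc (n - 1) n hn (by omega)
  have h2 : (0:ℝ) ≤ (n : ℝ) / l n := by
    have : (0:ℝ) ≤ (n:ℝ) := Nat.cast_nonneg n
    exact div_nonneg this (lpos hl1 hmono n hn).le
  calc (n : ℝ) / l n * mm d l (n - 1) ≤ (n : ℝ) / l n * cc d l n :=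
        mul_le_mul_of_nonneg_left h1 h2
    _ = BB d l n := div_mul_cc hd hl1 hmono hsum n hn

include hl1 hmono hdec in
lemma nl_mono (n : ℕ) (hn : 1 ≤ n) : (n : ℝ) / l n ≤ ((n:ℝ) + 1) / l (n + 1) := by
  have h := hdec n hn
  have p1 : 0 < l n := lpos hl1 hmono n hn
  have p2 : 0 < l (n + 1) := lpos hl1 hmono (n+1) (by omega)
  have p3 : (0:ℝ) < n := by exact_mod_cast hn
  have h' : l (n+1) * n ≤ l n * ((n:ℝ) + 1) := by
    rw [div_le_div_iff₀ (by positivity) p3] at h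
    push_cast at h
    linarith
  rw [div_le_div_iff₀ p1 p2]
  nlinarith

include hd hl1 hmono hdec hsum in
lemma AA_mono : Monotone (AA d l) := by
  apply monotone_nat_of_le_succ
  intro n
  rcases Nat.eq_zero_or_pos n with h0 | hn
  · subst h0
    have : (0:ℕ) ⊔ 1 = (0+1) ⊔ 1 := by norm_num
    rw [AA, AA, this]
  · have hn1 : 1 ≤ n + 1 := by omega
    rw [AA_eq n hn, AA_eq (n+1) hn1]
    have e1 : n + 1 - 1 = n := by omega
    have e2 : n - 1 + 1 = n := by omega
    have e3 : n - 1 + 2 = n + 1 := by omega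
    have hmmeq : mm d l n = min (cc d l (n+1)) (mm d l (n-1)) := by
      conv_lhs => rw [← e2]
      rw [mm_succ, e3]
    rw [e1, hmmeq]
    have hc : (0:ℝ) ≤ ((n:ℝ)+1) / l (n+1) := by
      have : (0:ℝ) < l (n+1) := lpos hl1 hmono (n+1) hn1
      positivity
    push_cast
    rw [mul_min_of_nonneg _ _ hc]
    apply le_min
    · have hb : ((n:ℝ)+1) / l (n+1) * cc d l (n+1) = BB d l (n+1) := by
        have := div_mul_cc hd hl1 hmono hsum (n+1) hn1
        push_cast at this
        exact this
      rw [hb]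
      exact le_trans (AA_eq n hn ▸ AA_le_BB hd hl1 hmono hsum n hn)
        (BB_mono hd hl1 hmono hsum (Nat.le_succ n))
    · exact mul_le_mul_of_nonneg_right (nl_mono hl1 hmono hdec n hn)
        (mm_pos hd hl1 hmono hsum _).le

include hd hl1 hmono hdec hsum in
lemma AA_tendsto (hto0 : Tendsto (fun n : ℕ => l n / n) atTop (nhds 0)) :
    Tendsto (AA d l) atTop atTop := by
  rw [tendsto_atTop]
  intro C
  obtain ⟨K, hK⟩ := eventually_atTop.1 ((tendsto_atTop.1 (BB_tendsto hd hl1 hmono hsum)) C)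
  set K' := max K 1 with hK'
  set ε := mm d l (K' - 1) with hε'
  have hε : 0 < ε := mm_pos hd hl1 hmono hsum _
  have E1 : ∀ᶠ n : ℕ in atTop, C * (l n / n) < ε := by
    have h := hto0.const_mul C
    rw [mul_zero] at h
    exact h.eventually_lt_const hε
  filter_upwards [E1, eventually_ge_atTop K', eventually_ge_atTop 1] with n h1 h2 h3
  rw [AA_eq n h3]
  have hln : 0 < l n := lpos hl1 hmono n h3
  have hn0 : (0:ℝ) < n := by exact_mod_cast h3
  have key : ∀ k, 1 ≤ k → k ≤ n → C * (l n / n) ≤ cc d l k := by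
    intro k hk hkn
    rcases le_or_gt K' k with hKk | hkK
    · rcases le_or_gt C 0 with hC | hC
      · exact le_trans (mul_nonpos_of_nonpos_of_nonneg hC (by positivity))
          (cc_pos hd hl1 hmono hsum k hk).le
      · have hBB : C ≤ BB d l k := hK k (le_trans (le_max_left K 1) hKk)
        have hdiv : l n / n ≤ l k / k := ldiv_anti hdec k n hk hkn
        have hkpos : (0:ℝ) < k := by exact_mod_cast hk
        have : cc d l k = BB d l k * (l k / k) := by rw [cc, mul_div_assoc]
        rw [this]
        exact mul_le_mul hBB hdiv (by positivity) (BB_pos hd hl1 hmono hsum k).le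
    · have hcc : ε ≤ cc d l k := mm_le_cc (K' - 1) k hk (by omega)
      exact le_trans h1.le hcc
  have hmm : C * (l n / n) ≤ mm d l (n - 1) := by
    apply Finset.le_inf'
    intro k hk
    obtain ⟨hk1, hk2⟩ := Finset.mem_Icc.1 hk
    exact key k hk1 (by omega)
  calc C = (n : ℝ) / l n * (C * (l n / n)) := by field_simp
    _ ≤ (n : ℝ) / l n * mm d l (n - 1) := mul_le_mul_of_nonneg_left hmm (by positivity)

end

end Stmt0Aux

theorem stmt0 (d : ℕ) (hd : 2 ≤ d) (l : ℕ → ℝ)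
    (hl1 : 1 < l 1) (hmono : Monotone l)
    (hlim : Tendsto l atTop atTop)
    (hdec : ∀ n : ℕ, 1 ≤ n → l (n + 1) / (n + 1) ≤ l n / n)
    (hto0 : Tendsto (fun n : ℕ => l n / n) atTop (nhds 0))
    (hsum : Summable (fun n : ℕ => l (n + 1) * (Real.log (n + 1)) ^ (d - 2) / ((n : ℝ) + 1) ^ 2)) :
    ∃ A : ℕ → ℝ, (∀ n, 0 < A n) ∧ Monotone A ∧ Tendsto A atTop atTop ∧
      (∀ n : ℕ, 1 ≤ n → l (n + 1) * A (n + 1) / (n + 1) ≤ l n * A n / n) ∧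
      Summable (fun n : ℕ =>
        l (n + 1) * (Real.log (n + 1)) ^ (d - 2) * A (n + 1) ^ d / ((n : ℝ) + 1) ^ 2) := by
  have hsum' : Summable (Stmt0Aux.aa d l) := hsum
  refine ⟨Stmt0Aux.AA d l, fun n => Stmt0Aux.AA_pos hd hl1 hmono hsum' n,
    Stmt0Aux.AA_mono hd hl1 hmono hdec hsum',
    Stmt0Aux.AA_tendsto hd hl1 hmono hdec hsum' hto0, ?_, ?_⟩
  · intro n hn
    have e1 := Stmt0Aux.l_mul_AA (d := d) hl1 hmono n hn
    have e2 := Stmt0Aux.l_mul_AA (d := d) hl1 hmono (n + 1) (by omega)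
    push_cast at e2
    rw [e1, e2]
    try simp only [Nat.add_sub_cancel]
    have e3 : n = (n - 1) + 1 := by omega
    rw [e3, Stmt0Aux.mm_succ]
    exact min_le_right _ _
  · have key : (fun n : ℕ => l (n + 1) * (Real.log (n + 1)) ^ (d - 2) *
        Stmt0Aux.AA d l (n + 1) ^ d / ((n : ℝ) + 1) ^ 2) =
        fun n => Stmt0Aux.aa d l n * Stmt0Aux.AA d l (n + 1) ^ d := by
      funext n
      rw [Stmt0Aux.aa]
      ring
    rw [key]
    have hg : Summable (fun n : ℕ =>
        2 * (Real.sqrt (Stmt0Aux.rr d l n) - Real.sqrt (Stmt0Aux.rr d l (n + 1)))) :=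
      Stmt0Aux.summable_tel hd hl1 hmono hsum'
    have h0 : ∀ n : ℕ, 0 ≤ Stmt0Aux.aa d l n * Stmt0Aux.AA d l (n + 1) ^ d := fun n =>
      mul_nonneg (Stmt0Aux.aa_nonneg hl1 hmono n)
        (pow_nonneg (Stmt0Aux.AA_pos hd hl1 hmono hsum' (n + 1)).le d)
    have hle : ∀ n : ℕ, Stmt0Aux.aa d l n * Stmt0Aux.AA d l (n + 1) ^ d ≤
        2 * (Real.sqrt (Stmt0Aux.rr d l n) - Real.sqrt (Stmt0Aux.rr d l (n + 1))) := by
      intro n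
      calc Stmt0Aux.aa d l n * Stmt0Aux.AA d l (n + 1) ^ d
          ≤ Stmt0Aux.aa d l n * Stmt0Aux.BB d l (n + 1) ^ d :=
            mul_le_mul_of_nonneg_left
              (pow_le_pow_left₀ (Stmt0Aux.AA_pos hd hl1 hmono hsum' (n + 1)).le
                (Stmt0Aux.AA_le_BB hd hl1 hmono hsum' (n + 1) (by omega)) d)
              (Stmt0Aux.aa_nonneg hl1 hmono n)
        _ = Stmt0Aux.aa d l n * (Real.sqrt (Stmt0Aux.rr d l n))⁻¹ := by
            rw [Stmt0Aux.BB_pow hd hl1 hmono hsum' n]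
        _ ≤ 2 * (Real.sqrt (Stmt0Aux.rr d l n) - Real.sqrt (Stmt0Aux.rr d l (n + 1))) :=
            Stmt0Aux.telescope hd hl1 hmono hsum' n
    exact Summable.of_nonneg_of_le h0 hle hg
end

section
/- Let d ≥ 2 and let (a_{i_1,...,i_d}) be nonnegative reals indexed by positive integers. Suppose for each k ∈ {1,...,d} there are nonnegative reals v_k(2^r) such that for all dyadic blocks [2^{r_1}, 2^{r_1+1}) × ⋯ × [2^{r_d}, 2^{r_d+1}), the block sum ∑ a_{i_1,...,i_d} over the block is at most C(d) · ∏_{k=1}^d 2^{r_k(1 - 1/d)} · v_k(2^{r_k})^{1/d}. If B_n = B_{2^N} for 2^N ≤ n < 2^{N+1} with B_{2^j} increasing and ∑_j B_{2^j} v_k(2^j)^{1/d} / 2^{j/d} < ∞ for each k, then ∑_{i_1,...,i_d} a_{i_1,...,i_d} · (B_{i_1}/i_1) ⋯ (B_{i_d}/i_d) < ∞. -/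
open Real Filter

theorem stmt4 (d : ℕ) (hd : 2 ≤ d) (a : (Fin d → ℕ) → ℝ) (v : Fin d → ℕ → ℝ)
    (B2 : ℕ → ℝ) (B : ℕ → ℝ) (Cd : ℝ)
    (ha : ∀ i, 0 ≤ a i) (hv : ∀ k r, 0 ≤ v k r)
    (hblock : ∀ r : Fin d → ℕ,
      ∑ i ∈ Fintype.piFinset (fun k => Finset.Ico (2 ^ r k) (2 ^ (r k + 1))), a i ≤
        Cd * ∏ k : Fin d, (2 : ℝ) ^ ((r k : ℝ) * (1 - 1 / d)) * (v k (r k)) ^ ((1 : ℝ) / d))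
    (hB2pos : ∀ j, 0 < B2 j) (hB2mono : Monotone B2)
    (hB : ∀ N n : ℕ, 2 ^ N ≤ n → n < 2 ^ (N + 1) → B n = B2 N)
    (hsum : ∀ k : Fin d,
      Summable (fun j : ℕ => B2 j * (v k j) ^ ((1 : ℝ) / d) / (2 : ℝ) ^ ((j : ℝ) / d))) :
    Summable (fun i : {i : Fin d → ℕ // ∀ k, 1 ≤ i k} =>
      a i.1 * ∏ k : Fin d, (B (i.1 k) / (i.1 k : ℝ))) := by
  have hd0 : (d : ℝ) ≠ 0 := by positivity
  set C : ℝ := max Cd 0 with hCdef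
  have hC0 : 0 ≤ C := le_max_right _ _
  set g : Fin d → ℕ → ℝ :=
    fun k j => B2 j * (v k j) ^ ((1 : ℝ) / d) / (2 : ℝ) ^ ((j : ℝ) / d) with hgdef
  have hg0 : ∀ k j, 0 ≤ g k j := by
    intro k j
    have := (hB2pos j).le
    have := hv k j
    positivity
  -- value of B on a dyadic block
  have hBval : ∀ n : ℕ, 1 ≤ n → B n = B2 (Nat.log 2 n) := fun n hn =>
    hB _ n (Nat.pow_log_le_self 2 (by omega)) (Nat.lt_pow_succ_log_self one_lt_two n)
  -- nonnegativity of the terms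
  have hf0 : ∀ i : {i : Fin d → ℕ // ∀ k, 1 ≤ i k},
      0 ≤ a i.1 * ∏ k : Fin d, (B (i.1 k) / (i.1 k : ℝ)) := by
    intro i
    refine mul_nonneg (ha _) (Finset.prod_nonneg fun k _ => ?_)
    rw [hBval _ (i.2 k)]
    exact div_nonneg (hB2pos _).le (Nat.cast_nonneg _)
  -- the key identity for one factor
  have hkey : ∀ (k : Fin d) (j : ℕ),
      B2 j / (2 : ℝ) ^ (j : ℕ) *
        ((2 : ℝ) ^ ((j : ℝ) * (1 - 1 / d)) * (v k j) ^ ((1 : ℝ) / d)) = g k j := by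
    intro k j
    have h2 : (0 : ℝ) < 2 := two_pos
    have e1 : ((j : ℝ) * (1 - 1 / d)) = (j : ℝ) - (j : ℝ) / d := by ring
    have e2 : ((2 : ℝ) ^ (j : ℕ)) = (2 : ℝ) ^ ((j : ℝ)) := (Real.rpow_natCast 2 j).symm
    rw [e1, Real.rpow_sub h2, e2, hgdef]
    have h3 : (0 : ℝ) < (2 : ℝ) ^ ((j : ℝ)) := Real.rpow_pos_of_pos h2 _
    have h4 : (0 : ℝ) < (2 : ℝ) ^ ((j : ℝ) / d) := Real.rpow_pos_of_pos h2 _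
    field_simp
  -- block bound for the weighted sums
  have hblock2 : ∀ r : Fin d → ℕ,
      ∑ i ∈ Fintype.piFinset (fun k => Finset.Ico (2 ^ r k) (2 ^ (r k + 1))),
        (a i * ∏ k : Fin d, (B (i k) / (i k : ℝ))) ≤ C * ∏ k : Fin d, g k (r k) := by
    intro r
    set P : ℝ := ∏ k : Fin d, B2 (r k) / (2 : ℝ) ^ (r k) with hPdef
    have hP0 : 0 ≤ P := Finset.prod_nonneg fun k _ => by
      have := (hB2pos (r k)).le; positivity
    have step1 : ∑ i ∈ Fintype.piFinset (fun k => Finset.Ico (2 ^ r k) (2 ^ (r k + 1))),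
        (a i * ∏ k : Fin d, (B (i k) / (i k : ℝ))) ≤
        (∑ i ∈ Fintype.piFinset (fun k => Finset.Ico (2 ^ r k) (2 ^ (r k + 1))), a i) * P := by
      rw [Finset.sum_mul]
      refine Finset.sum_le_sum fun i hi => ?_
      rw [Fintype.mem_piFinset] at hi
      refine mul_le_mul_of_nonneg_left ?_ (ha i)
      refine Finset.prod_le_prod (fun k _ => ?_) (fun k _ => ?_)
      · obtain ⟨h1, h2⟩ := Finset.mem_Ico.1 (hi k)
        rw [hB (r k) (i k) h1 h2]
        have : (0:ℕ) < i k := lt_of_lt_of_le (Nat.pow_pos (by norm_num)) h1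
        have := (hB2pos (r k)).le
        positivity
      · obtain ⟨h1, h2⟩ := Finset.mem_Ico.1 (hi k)
        rw [hB (r k) (i k) h1 h2]
        have hp : (0:ℝ) < (2:ℝ) ^ (r k) := by positivity
        have hle : ((2:ℝ) ^ (r k)) ≤ (i k : ℝ) := by
          exact_mod_cast Nat.cast_le.2 h1 |>.trans_eq (by push_cast; ring)
        exact div_le_div_of_nonneg_left (hB2pos (r k)).le hp hle
    have hsa : 0 ≤ ∑ i ∈ Fintype.piFinset (fun k => Finset.Ico (2 ^ r k) (2 ^ (r k + 1))), a i :=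
      Finset.sum_nonneg fun i _ => ha i
    have hX0 : 0 ≤ ∏ k : Fin d, (2 : ℝ) ^ ((r k : ℝ) * (1 - 1 / d)) * (v k (r k)) ^ ((1 : ℝ) / d) :=
      Finset.prod_nonneg fun k _ => by have := hv k (r k); positivity
    have step2 : (∑ i ∈ Fintype.piFinset (fun k => Finset.Ico (2 ^ r k) (2 ^ (r k + 1))), a i) * P
        ≤ (C * ∏ k : Fin d, (2 : ℝ) ^ ((r k : ℝ) * (1 - 1 / d)) * (v k (r k)) ^ ((1 : ℝ) / d)) * P := by
      refine mul_le_mul_of_nonneg_right ((hblock r).trans ?_) hP0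
      exact mul_le_mul_of_nonneg_right (le_max_left _ _) hX0
    refine (step1.trans step2).trans_eq ?_
    rw [hPdef, mul_assoc, ← Finset.prod_mul_distrib]
    congr 1
    refine Finset.prod_congr rfl fun k _ => ?_
    rw [mul_comm]
    exact hkey k (r k)
  -- uniform bound constant
  set c : ℝ := C * ∏ k : Fin d, ∑' j : ℕ, g k j with hcdef
  refine summable_of_sum_le (c := c) (fun i => hf0 i) fun u => ?_
  -- choose M bounding all coordinates
  obtain ⟨M, hcoord⟩ : ∃ M : ℕ, ∀ i ∈ u, ∀ k : Fin d, Nat.log 2 (i.1 k) < M := by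
    refine ⟨u.sup (fun i => Finset.univ.sup i.1) + 1, fun i hi k => ?_⟩
    have h1 : i.1 k ≤ u.sup (fun i => Finset.univ.sup i.1) :=
      le_trans (Finset.le_sup (Finset.mem_univ k))
        (Finset.le_sup (f := fun i => Finset.univ.sup i.1) hi)
    have h2 : i.1 k < 2 ^ (u.sup (fun i => Finset.univ.sup i.1) + 1) :=
      lt_of_le_of_lt h1 (lt_of_lt_of_le Nat.lt_two_pow_self
        (Nat.pow_le_pow_right (by norm_num) (Nat.le_succ _)))
    exact (Nat.log_lt_iff_lt_pow one_lt_two (Nat.one_le_iff_ne_zero.mp (i.2 k))).2 h2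
  -- the big union of blocks
  set T : Finset (Fin d → ℕ) :=
    (Fintype.piFinset (fun _ : Fin d => Finset.range M)).biUnion
      (fun r => Fintype.piFinset (fun k => Finset.Ico (2 ^ r k) (2 ^ (r k + 1)))) with hTdef
  have hmemblock : ∀ (x : Fin d → ℕ) (r : Fin d → ℕ),
      x ∈ Fintype.piFinset (fun k => Finset.Ico (2 ^ r k) (2 ^ (r k + 1))) →
      ∀ k, r k = Nat.log 2 (x k) := by
    intro x r hx k
    rw [Fintype.mem_piFinset] at hx
    obtain ⟨h1, h2⟩ := Finset.mem_Ico.1 (hx k)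
    exact (Nat.log_eq_of_pow_le_of_lt_pow h1 h2).symm
  have hdisj : Set.PairwiseDisjoint
      ((Fintype.piFinset (fun _ : Fin d => Finset.range M) : Finset (Fin d → ℕ)) : Set (Fin d → ℕ))
      (fun r => Fintype.piFinset (fun k => Finset.Ico (2 ^ r k) (2 ^ (r k + 1)))) := by
    intro r _ r' _ hne
    refine Finset.disjoint_left.2 fun x hx hx' => hne ?_
    funext k
    rw [hmemblock x r hx k, hmemblock x r' hx' k]
  have himage : u.image Subtype.val ⊆ T := by
    intro x hx
    obtain ⟨i, hi, rfl⟩ := Finset.mem_image.1 hx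
    rw [hTdef, Finset.mem_biUnion]
    refine ⟨fun k => Nat.log 2 (i.1 k), ?_, ?_⟩
    · rw [Fintype.mem_piFinset]
      exact fun k => Finset.mem_range.2 (hcoord i hi k)
    · rw [Fintype.mem_piFinset]
      intro k
      exact Finset.mem_Ico.2 ⟨Nat.pow_log_le_self 2 (Nat.one_le_iff_ne_zero.mp (i.2 k)),
        Nat.lt_pow_succ_log_self one_lt_two _⟩
  have hTnonneg : ∀ x ∈ T, 0 ≤ a x * ∏ k : Fin d, (B (x k) / (x k : ℝ)) := by
    intro x hxT
    rw [hTdef, Finset.mem_biUnion] at hxT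
    obtain ⟨r, _, hx⟩ := hxT
    rw [Fintype.mem_piFinset] at hx
    refine mul_nonneg (ha x) (Finset.prod_nonneg fun k _ => ?_)
    obtain ⟨h1, h2⟩ := Finset.mem_Ico.1 (hx k)
    rw [hB (r k) (x k) h1 h2]
    have := (hB2pos (r k)).le
    positivity
  calc ∑ i ∈ u, (a i.1 * ∏ k : Fin d, (B (i.1 k) / (i.1 k : ℝ)))
      = ∑ x ∈ u.image Subtype.val, (a x * ∏ k : Fin d, (B (x k) / (x k : ℝ))) := by
        rw [Finset.sum_image (fun x _ y _ h => Subtype.ext h)]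
    _ ≤ ∑ x ∈ T, (a x * ∏ k : Fin d, (B (x k) / (x k : ℝ))) :=
        Finset.sum_le_sum_of_subset_of_nonneg himage (fun x hx _ => hTnonneg x hx)
    _ = ∑ r ∈ Fintype.piFinset (fun _ : Fin d => Finset.range M),
          ∑ x ∈ Fintype.piFinset (fun k => Finset.Ico (2 ^ r k) (2 ^ (r k + 1))),
            (a x * ∏ k : Fin d, (B (x k) / (x k : ℝ))) := by
        rw [hTdef, Finset.sum_biUnion hdisj]
    _ ≤ ∑ r ∈ Fintype.piFinset (fun _ : Fin d => Finset.range M),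
          C * ∏ k : Fin d, g k (r k) :=
        Finset.sum_le_sum fun r _ => hblock2 r
    _ = C * ∏ k : Fin d, ∑ j ∈ Finset.range M, g k j := by
        rw [← Finset.mul_sum, Finset.prod_univ_sum]
    _ ≤ c := by
        rw [hcdef]
        refine mul_le_mul_of_nonneg_left ?_ hC0
        refine Finset.prod_le_prod (fun k _ => Finset.sum_nonneg fun j _ => hg0 k j)
          (fun k _ => Summable.sum_le_tsum _ (fun j _ => hg0 k j) (hsum k))
end
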